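/- Check–plaquette annihilation: suppose the commutation-function conditions c(p_g,p_b) + c(q_g,q_b) ≡ 0 and c(p_r,p_g) + c(q_r,q_g) ≡ 0 hold modulo D, and suppose the check-product condition (p_g * p_r * p_b) ⊗ₖ (q_g * q_r * q_b) = 1 holds. Then the product of the blue plaquette edge operator with the green check equals the identity: ((p_r * p_b) ⊗ₖ (q_r * q_b)) * (p_g ⊗ₖ q_g) = 1. -/

import Mathlib

noncomputable def omg (D : ℕ) : ℂ := Complex.exp (2 * Real.pi * Complex.I / D)

noncomputable def Xmat (D : ℕ) : Matrix (Fin D) (Fin D) ℂ :=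
  Matrix.of fun i j => if (i : ZMod D) = (j : ZMod D) + 1 then 1 else 0

noncomputable def Zmat (D : ℕ) : Matrix (Fin D) (Fin D) ℂ :=
  Matrix.of fun i j => if i = j then (omg D) ^ (i : ℕ) else 0

open Kronecker

namespace CheckPlaquetteAux

lemma omg_ne (D : ℕ) : omg D ≠ 0 := Complex.exp_ne_zero _

lemma omg_pow_D (D : ℕ) (hD : D ≠ 0) : omg D ^ D = 1 := by
  rw [omg, ← Complex.exp_nat_mul, mul_div_cancel₀]
  · exact Complex.exp_two_pi_mul_I
  · exact_mod_cast hD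

lemma Zmat_diag (D : ℕ) : Zmat D = Matrix.diagonal (fun i : Fin D => omg D ^ (i : ℕ)) := by
  ext i j
  by_cases h : i = j <;> simp [Zmat, Matrix.diagonal_apply, h]

lemma Z_unit (D : ℕ) : IsUnit (Zmat D) := by
  rw [Zmat_diag, Matrix.isUnit_diagonal]
  refine IsUnit.of_mul_eq_one (fun i => (omg D ^ (i:ℕ))⁻¹) (funext fun i => ?_)
  exact mul_inv_cancel₀ (pow_ne_zero _ (omg_ne D))

lemma finCast_inj (D : ℕ) [NeZero D] {j j' : Fin D} (h : (j : ZMod D) = (j' : ZMod D)) : j = j' := by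
  have := congrArg ZMod.val h
  rwa [ZMod.val_natCast_of_lt j.isLt, ZMod.val_natCast_of_lt j'.isLt, ← Fin.ext_iff] at this

lemma X_mul_Xt (D : ℕ) [NeZero D] : Xmat D * (Xmat D).transpose = 1 := by
  ext i k
  simp only [Matrix.mul_apply, Xmat, Matrix.transpose_apply, Matrix.of_apply, Matrix.one_apply,
    ite_mul, one_mul, zero_mul]
  set t : ZMod D := (i : ZMod D) - 1 with ht
  set j0 : Fin D := ⟨t.val, ZMod.val_lt t⟩ with hj0def
  have hj0 : (j0 : ZMod D) = t := ZMod.natCast_rightInverse t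
  have hcond : ∀ j : Fin D, ((i:ZMod D) = (j:ZMod D)+1) ↔ j = j0 := by
    intro j
    constructor
    · intro h
      exact finCast_inj D (by rw [hj0, ht, eq_sub_iff_add_eq, ← h])
    · rintro rfl
      rw [hj0, ht, sub_add_cancel]
  simp only [hcond]
  rw [Finset.sum_ite_eq' Finset.univ j0]
  simp only [Finset.mem_univ, if_true]
  rw [hj0, ht, sub_add_cancel]
  by_cases h : i = k
  · simp [h]
  · rw [if_neg h, if_neg (fun hc => h (finCast_inj D hc.symm))]

lemma X_unit (D : ℕ) [NeZero D] : IsUnit (Xmat D) := by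
  rw [Matrix.isUnit_iff_isUnit_det]
  have := congrArg Matrix.det (X_mul_Xt D)
  rw [Matrix.det_mul, Matrix.det_one] at this
  exact IsUnit.of_mul_eq_one _ this

lemma ZX_comm (D : ℕ) [NeZero D] : Zmat D * Xmat D = omg D • (Xmat D * Zmat D) := by
  ext i j
  simp only [Matrix.mul_apply, Zmat, Xmat, Matrix.of_apply, Matrix.smul_apply, ite_mul, mul_ite,
    zero_mul, mul_zero, one_mul, mul_one, smul_eq_mul, Finset.mul_sum]
  rw [Finset.sum_eq_single i (fun b _ hb => by simp [Ne.symm hb]) (by simp),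
      Finset.sum_eq_single j (fun b _ hb => by simp [hb]) (by simp)]
  simp only [if_pos rfl]
  by_cases h : (i:ZMod D) = (j:ZMod D) + 1
  · rw [if_pos h, if_pos h]
    have hmod : (i:ℕ) ≡ (j:ℕ)+1 [MOD D] := by
      rw [← ZMod.natCast_eq_natCast_iff]
      push_cast
      exact h
    rw [pow_eq_pow_mod (i:ℕ) (omg_pow_D D (NeZero.ne D)), hmod,
      ← pow_eq_pow_mod ((j:ℕ)+1) (omg_pow_D D (NeZero.ne D)), pow_succ]
    ring_nf
  · rw [if_neg h, if_neg h]; simp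

lemma grp_comm {G : Type*} [Group G] (w x z : G) (hw : ∀ g, Commute w g)
    (h : z * x = w * (x * z)) (a b : ℤ) : z ^ b * x ^ a = w ^ (a * b) * (x ^ a * z ^ b) := by
  have h1 : (MulAut.conj x) z = w⁻¹ * z := by
    rw [MulAut.conj_apply, mul_inv_eq_iff_eq_mul, mul_assoc, h]
    group
  have h2 : x * z ^ b * x⁻¹ = w ^ (-b) * z ^ b := by
    have := map_zpow (MulAut.conj x) z b
    rw [h1, ((hw z).inv_left).mul_zpow] at this
    simpa [mul_assoc, zpow_neg, inv_zpow] using this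
  have h3 : (MulAut.conj (z ^ b)) x = w ^ b * x := by
    rw [mul_inv_eq_iff_eq_mul] at h2
    rw [MulAut.conj_apply, mul_inv_eq_iff_eq_mul, mul_assoc, h2]
    group
  have h4 := map_zpow (MulAut.conj (z ^ b)) x a
  rw [h3, ((hw x).zpow_left b).mul_zpow] at h4
  rw [MulAut.conj_apply] at h4
  have h5 : z ^ b * x ^ a = (w ^ b) ^ a * x ^ a * z ^ b := by
    rw [← h4]; group
  rw [h5, ← zpow_mul, mul_comm b a, mul_assoc]

lemma ZX_zpow (D : ℕ) [NeZero D] (a b : ℤ) :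
    Zmat D ^ b * Xmat D ^ a = (omg D ^ (a*b) : ℂ) • (Xmat D ^ a * Zmat D ^ b) := by
  set M := Matrix (Fin D) (Fin D) ℂ
  set xu : Mˣ := (X_unit D).unit with hxu
  set zu : Mˣ := (Z_unit D).unit with hzu
  set ωu : ℂˣ := Units.mk0 (omg D) (omg_ne D) with hωu
  set w : Mˣ := Units.map (algebraMap ℂ M).toMonoidHom ωu with hw
  have hxv : (xu : M) = Xmat D := (X_unit D).unit_spec
  have hzv : (zu : M) = Zmat D := (Z_unit D).unit_spec
  have hwv : ∀ k : ℤ, ((w ^ k : Mˣ) : M) = algebraMap ℂ M (omg D ^ k) := by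
    intro k
    rw [hw, ← map_zpow, Units.coe_map]
    simp [hωu]
  have hcen : ∀ g : Mˣ, Commute w g := by
    intro g
    apply Units.ext
    show (w : M) * g = g * (w : M)
    have hwval : (w : M) = algebraMap ℂ M (omg D) := by simpa using hwv 1
    rw [hwval]
    exact Algebra.commutes _ _
  have hrel : zu * xu = w * (xu * zu) := by
    apply Units.ext
    show (zu : M) * xu = (w : M) * ((xu : M) * (zu : M))
    rw [hxv, hzv]
    have : (w : M) = algebraMap ℂ M (omg D) := by
      have := hwv 1
      simpa using this
    rw [this, ← Algebra.smul_def]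
    exact ZX_comm D
  have key := grp_comm w xu zu hcen hrel a b
  have hc := congrArg (Units.val) key
  rw [Units.val_mul, Units.val_mul, hwv, Units.val_mul, Matrix.coe_units_zpow,
    Matrix.coe_units_zpow, hxv, hzv, ← Algebra.smul_def] at hc
  exact hc

lemma X_det_unit (D : ℕ) [NeZero D] : IsUnit (Xmat D).det :=
  (Matrix.isUnit_iff_isUnit_det _).mp (X_unit D)

lemma Z_det_unit (D : ℕ) [NeZero D] : IsUnit (Zmat D).det :=
  (Matrix.isUnit_iff_isUnit_det _).mp (Z_unit D)

lemma XZ_normal (D : ℕ) [NeZero D] (a b a' b' : ℤ) :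
    (Xmat D ^ a * Zmat D ^ b) * (Xmat D ^ a' * Zmat D ^ b') =
      (omg D ^ (a'*b) : ℂ) • (Xmat D ^ (a+a') * Zmat D ^ (b+b')) := by
  have e1 : (Xmat D ^ a * Zmat D ^ b) * (Xmat D ^ a' * Zmat D ^ b') =
      Xmat D ^ a * (Zmat D ^ b * Xmat D ^ a') * Zmat D ^ b' := by
    simp only [mul_assoc]
  rw [e1, ZX_zpow, mul_smul_comm, smul_mul_assoc]
  congr 1
  rw [Matrix.zpow_add (X_det_unit D), Matrix.zpow_add (Z_det_unit D)]
  simp only [mul_assoc]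

lemma triple (D : ℕ) [NeZero D] (a1 b1 a2 b2 a3 b3 : ℤ) :
    (Xmat D ^ a1 * Zmat D ^ b1) * (Xmat D ^ a2 * Zmat D ^ b2) * (Xmat D ^ a3 * Zmat D ^ b3) =
      (omg D ^ (a2*b1 + (a3*b1 + a3*b2)) : ℂ) •
        (Xmat D ^ (a1+a2+a3) * Zmat D ^ (b1+b2+b3)) := by
  rw [XZ_normal, smul_mul_assoc, XZ_normal, smul_smul, ← zpow_add₀ (omg_ne D)]
  congr 2
  ring

end CheckPlaquetteAux

open CheckPlaquetteAux in
/-- Check–plaquette annihilation: the blue plaquette edge operator times the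
green check equals the identity. -/
theorem check_plaquette_annihilation (D : ℕ) (hD : 2 ≤ D)
    (ag bg ar br ab bb αg βg αr βr αb βb : ℤ)
    (pg : Matrix (Fin D) (Fin D) ℂ) (hpg : pg = Xmat D ^ ag * Zmat D ^ bg)
    (pr : Matrix (Fin D) (Fin D) ℂ) (hpr : pr = Xmat D ^ ar * Zmat D ^ br)
    (pb : Matrix (Fin D) (Fin D) ℂ) (hpb : pb = Xmat D ^ ab * Zmat D ^ bb)
    (qg : Matrix (Fin D) (Fin D) ℂ) (hqg : qg = Xmat D ^ αg * Zmat D ^ βg)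
    (qr : Matrix (Fin D) (Fin D) ℂ) (hqr : qr = Xmat D ^ αr * Zmat D ^ βr)
    (qb : Matrix (Fin D) (Fin D) ℂ) (hqb : qb = Xmat D ^ αb * Zmat D ^ βb)
    (h1 : (((-(ag * bb) + ab * bg) + (-(αg * βb) + αb * βg) : ℤ) : ZMod D) = 0)
    (h2 : (((-(ar * bg) + ag * br) + (-(αr * βg) + αg * βr) : ℤ) : ZMod D) = 0)
    (hprod : (pg * pr * pb) ⊗ₖ (qg * qr * qb) = 1) :
    ((pr * pb) ⊗ₖ (qr * qb)) * (pg ⊗ₖ qg) = 1 := by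
  haveI : NeZero D := ⟨by omega⟩
  subst hpg hpr hpb hqg hqr hqb
  rw [← Matrix.mul_kronecker_mul]
  rw [triple, triple] at hprod ⊢
  rw [Matrix.smul_kronecker, Matrix.kronecker_smul, smul_smul,
    ← zpow_add₀ (omg_ne D)] at hprod ⊢
  set E1 : ℤ := ab*br + (ag*br + ag*bb) + (αb*βr + (αg*βr + αg*βb)) with hE1
  set E2 : ℤ := ar*bg + (ab*bg + ab*br) + (αr*βg + (αb*βg + αb*βr)) with hE2
  -- fix up exponent orders: goal exponents
  have hXp : ar + ab + ag = ag + ar + ab := by ring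
  have hZp : br + bb + bg = bg + br + bb := by ring
  have hXq : αr + αb + αg = αg + αr + αb := by ring
  have hZq : βr + βb + βg = βg + βr + βb := by ring
  rw [hXp, hZp, hXq, hZq]
  have hdvd : (D:ℤ) ∣ (E1 - E2) := by
    rw [← ZMod.intCast_zmod_eq_zero_iff_dvd]
    have hcomb : ((E1 - E2 : ℤ) : ZMod D) =
        ((((-(ar * bg) + ag * br) + (-(αr * βg) + αg * βr) : ℤ) : ZMod D)) -
        ((((-(ag * bb) + ab * bg) + (-(αg * βb) + αb * βg) : ℤ) : ZMod D)) := by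
      push_cast [hE1, hE2]
      ring_nf
    rw [hcomb, h1, h2, sub_zero]
  obtain ⟨k, hk⟩ := hdvd
  have homg : (omg D : ℂ) ^ E1 = omg D ^ E2 := by
    have : E1 = E2 + D * k := by linarith [hk]
    rw [this, zpow_add₀ (omg_ne D), zpow_mul, zpow_natCast, omg_pow_D D (NeZero.ne D), one_zpow,
      mul_one]
  rw [homg]
  exact hprod
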